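/- Let d ≥ 2. The set S = {g ∈ ℂ^d : ‖g‖ = 1 and ⟨g, M^k T^ℓ g⟩ ≠ 0 for all (k,ℓ) ∈ (ℤ/dℤ)²} is nonempty, and S is open and dense in the unit sphere of ℂ^d (with its subspace topology). Equivalently, the set of unit vectors g with rank(G(g)) = d² is open dense in the unit sphere. -/

import Mathlib

open Complex Finset

noncomputable section

/-- `gw d` is the primitive `d`-th root of unity `ω = exp(2πi/d)`. -/
def gw (d : ℕ) : ℂ := Complex.exp (2 * Real.pi * Complex.I / d)

/-- `modT d k l g = M^k T^ℓ g`, where `(Mg)_n = ω^n g_n` and `(Tg)_n = g_{n-1}`. -/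
def modT (d : ℕ) (k l : ZMod d) (g : ZMod d → ℂ) : ZMod d → ℂ :=
  fun n => gw d ^ (k.val * n.val) * g (n - l)

/-- `inn d x y = ⟨x,y⟩ = Σ_n x_n conj(y_n)`. -/
def inn (d : ℕ) [NeZero d] (x y : ZMod d → ℂ) : ℂ :=
  ∑ n : ZMod d, x n * (starRingEnd ℂ) (y n)

/-- The `d² × d²` Gram matrix `G(g)` with entries `|⟨M^k T^ℓ g, M^{k'} T^{ℓ'} g⟩|²`. -/
def Gmat (d : ℕ) [NeZero d] (g : ZMod d → ℂ) :
    Matrix (ZMod d × ZMod d) (ZMod d × ZMod d) ℂ :=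
  fun p q =>
    ((‖inn d (modT d p.1 p.2 g) (modT d q.1 q.2 g)‖ ^ 2 : ℝ) : ℂ)

namespace S3
variable (d : ℕ) [NeZero d]

lemma gw_pow_d : gw d ^ d = 1 := by
  have h := Complex.isPrimitiveRoot_exp d (NeZero.ne d)
  simpa [gw] using h.pow_eq_one

def e (x : ZMod d) : ℂ := gw d ^ x.val

lemma gw_pow_mod (m : ℕ) : gw d ^ m = gw d ^ (m % d) := by
  conv_lhs => rw [← Nat.mod_add_div m d, pow_add, pow_mul, gw_pow_d, one_pow, mul_one]

lemma e_add (x y : ZMod d) : e d (x + y) = e d x * e d y := by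
  rw [e, e, e, ZMod.val_add, ← gw_pow_mod, pow_add]

lemma e_zero : e d 0 = 1 := by simp [e, ZMod.val_zero]

lemma e_mul_val (k n : ZMod d) : gw d ^ (k.val * n.val) = e d (k * n) := by
  rw [e, ZMod.val_mul, ← gw_pow_mod]

lemma e_ne_zero (x : ZMod d) : e d x ≠ 0 := by
  intro h
  have : e d x * e d (-x) = 1 := by rw [← e_add]; simp [e_zero]
  rw [h, zero_mul] at this; exact zero_ne_one this

lemma abs_gw : ‖gw d‖ = 1 := by
  simp [gw, Complex.norm_exp]


lemma abs_e (x : ZMod d) : ‖e d x‖ = 1 := by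
  simp [e, map_pow, abs_gw]

lemma conj_e (x : ZMod d) : (starRingEnd ℂ) (e d x) = e d (-x) := by
  have h1 : e d x * e d (-x) = 1 := by rw [← e_add]; simp [e_zero]
  have h2 : e d x * (starRingEnd ℂ) (e d x) = 1 := by
    rw [Complex.mul_conj]
    norm_cast
    rw [← Complex.sq_norm, abs_e]  -- normSq = abs^2
    norm_num
  exact mul_left_cancel₀ (e_ne_zero d x) (h2.trans h1.symm)

lemma sum_e (t : ZMod d) : ∑ k : ZMod d, e d (k * t) = if t = 0 then (d : ℂ) else 0 := by
  split_ifs with h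
  · simp [h, e_zero, Finset.card_univ, ZMod.card]
  · have hx : e d t ≠ 1 := by
      intro h1
      have := Complex.isPrimitiveRoot_exp d (NeZero.ne d)
      have h2 : t.val = 0 := by
        have hdvd := (this.pow_eq_one_iff_dvd t.val).mp (by simpa [gw, e] using h1)
        exact Nat.eq_zero_of_dvd_of_lt hdvd (ZMod.val_lt t)
      exact h (by rwa [← ZMod.val_eq_zero])
    have hpow : ∀ k : ZMod d, e d (k * t) = (e d t) ^ k.val := by
      intro k
      rw [e, e, ← pow_mul, ZMod.val_mul, ← gw_pow_mod, mul_comm]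
    rw [Finset.sum_congr rfl (fun k _ => hpow k)]
    have hre : ∑ k : ZMod d, e d t ^ k.val = ∑ i ∈ Finset.range d, e d t ^ i := by
      refine Finset.sum_nbij' (fun (k : ZMod d) => k.val) (fun i => ((i : ℕ) : ZMod d)) ?_ ?_ ?_ ?_ ?_
      · intro k _; exact Finset.mem_range.mpr (ZMod.val_lt k)
      · intro i _; exact Finset.mem_univ _
      · intro k _; simp [ZMod.natCast_val, ZMod.cast_id]
      · intro i hi; exact ZMod.val_natCast_of_lt (Finset.mem_range.mp hi)
      · intro k _; rfl
    rw [hre, geom_sum_eq hx d]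
    have hxd : e d t ^ d = 1 := by
      rw [e, ← pow_mul, mul_comm, pow_mul, gw_pow_d, one_pow]
    rw [hxd, sub_self, zero_div]

def A (g : ZMod d → ℂ) (k l : ZMod d) : ℂ :=
  ∑ n : ZMod d, e d (-(k*n)) * (g n * (starRingEnd ℂ) (g (n - l)))

lemma inn_modT (g : ZMod d → ℂ) (k l : ZMod d) : inn d g (modT d k l g) = A d g k l := by
  unfold inn modT A
  refine Finset.sum_congr rfl fun n _ => ?_
  rw [e_mul_val, map_mul, conj_e]
  ring

lemma absSq (z : ℂ) : ((‖z‖ ^ 2 : ℝ) : ℂ) = z * (starRingEnd ℂ) z := by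
  rw [Complex.mul_conj, Complex.sq_norm]

lemma conj_A (g : ZMod d → ℂ) (k l : ZMod d) :
    (starRingEnd ℂ) (A d g k l) = ∑ m : ZMod d, e d (k*m) * ((starRingEnd ℂ) (g m) * g (m - l)) := by
  unfold A
  rw [map_sum]
  refine Finset.sum_congr rfl fun m _ => ?_
  rw [map_mul, map_mul, conj_e, neg_neg, Complex.conj_conj]

lemma moyal (g : ZMod d → ℂ) (a b : ZMod d) :
    ∑ k : ZMod d, ∑ l : ZMod d,
        (((‖A d g k l‖) ^ 2 : ℝ) : ℂ) * e d (a*k + b*l)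
      = (d : ℂ) * (((‖A d g (-b) a‖) ^ 2 : ℝ) : ℂ) := by
  have key : ∀ k l : ZMod d,
      (((‖A d g k l‖) ^ 2 : ℝ) : ℂ) * e d (a*k + b*l)
        = ∑ n : ZMod d, ∑ m : ZMod d,
            e d (k*(m - n + a)) * (e d (b*l) *
              (g n * (starRingEnd ℂ) (g (n - l)) * ((starRingEnd ℂ) (g m) * g (m - l)))) := by
    intro k l
    rw [absSq, conj_A]
    unfold A
    rw [Finset.sum_mul_sum, Finset.sum_mul]
    refine Finset.sum_congr rfl fun n _ => ?_
    rw [Finset.sum_mul]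
    refine Finset.sum_congr rfl fun m _ => ?_
    have harg : k*(m - n + a) = k*m + -(k*n) + a*k := by ring
    have h2 : a*k + b*l = a*k + b*l := rfl
    rw [harg, e_add, e_add, e_add]
    ring
  calc ∑ k : ZMod d, ∑ l : ZMod d,
        (((‖A d g k l‖) ^ 2 : ℝ) : ℂ) * e d (a*k + b*l)
      = ∑ k : ZMod d, ∑ l : ZMod d, ∑ n : ZMod d, ∑ m : ZMod d,
            e d (k*(m - n + a)) * (e d (b*l) *
              (g n * (starRingEnd ℂ) (g (n - l)) * ((starRingEnd ℂ) (g m) * g (m - l)))) := by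
        exact Finset.sum_congr rfl fun k _ => Finset.sum_congr rfl fun l _ => key k l
    _ = ∑ l : ZMod d, ∑ n : ZMod d, ∑ m : ZMod d, ∑ k : ZMod d,
            e d (k*(m - n + a)) * (e d (b*l) *
              (g n * (starRingEnd ℂ) (g (n - l)) * ((starRingEnd ℂ) (g m) * g (m - l)))) := by
        rw [Finset.sum_comm]
        exact Finset.sum_congr rfl fun l _ => by
          rw [Finset.sum_comm]
          exact Finset.sum_congr rfl fun n _ => Finset.sum_comm
    _ = ∑ l : ZMod d, ∑ n : ZMod d, ∑ m : ZMod d,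
            (if m - n + a = 0 then (d:ℂ) else 0) * (e d (b*l) *
              (g n * (starRingEnd ℂ) (g (n - l)) * ((starRingEnd ℂ) (g m) * g (m - l)))) := by
        refine Finset.sum_congr rfl fun l _ => Finset.sum_congr rfl fun n _ =>
          Finset.sum_congr rfl fun m _ => ?_
        rw [← Finset.sum_mul, sum_e]
    _ = ∑ l : ZMod d, ∑ n : ZMod d, (d:ℂ) * (e d (b*l) *
              (g n * (starRingEnd ℂ) (g (n - l)) * ((starRingEnd ℂ) (g (n - a)) * g (n - a - l)))) := by
        refine Finset.sum_congr rfl fun l _ => Finset.sum_congr rfl fun n _ => ?_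
        have hc : ∀ m : ZMod d, (m - n + a = 0) = (m = n - a) := by
          intro m; apply propext; constructor <;> intro h
          · linear_combination h
          · subst h; ring
        simp_rw [hc, ite_mul, zero_mul]
        rw [Finset.sum_ite_eq' Finset.univ (n - a)]
        simp
    _ = (d:ℂ) * ∑ n : ZMod d, ∑ l : ZMod d, e d (b*l) *
              (g n * (starRingEnd ℂ) (g (n - l)) * ((starRingEnd ℂ) (g (n - a)) * g (n - a - l))) := by
        rw [Finset.sum_comm, Finset.mul_sum]
        exact Finset.sum_congr rfl fun n _ => by rw [Finset.mul_sum]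
    _ = (d:ℂ) * ∑ n : ZMod d, ∑ u : ZMod d, (e d (b*n) * (g n * (starRingEnd ℂ) (g (n - a)))) *
            (e d (-(b*u)) * ((starRingEnd ℂ) (g u) * g (u - a))) := by
        congr 1
        refine Finset.sum_congr rfl fun n _ => ?_
        refine (Fintype.sum_equiv (Equiv.subLeft n) _ _ ?_).symm
        intro u
        have h1 : n - (n - u) = u := by ring
        have h2 : n - a - (n - u) = u - a := by ring
        have h3 : b*(n - u) = b*n + -(b*u) := by ring
        simp only [Equiv.subLeft_apply, h1, h2, h3, e_add]
        ring
    _ = (d:ℂ) * ((A d g (-b) a) * (starRingEnd ℂ) (A d g (-b) a)) := by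
        congr 1
        rw [← Finset.sum_mul_sum, conj_A]
        congr 1
        · unfold A
          refine Finset.sum_congr rfl fun n _ => ?_
          have : -(-b*n) = b*n := by ring
          rw [this]
        · refine Finset.sum_congr rfl fun u _ => ?_
          have : -b*u = -(b*u) := by ring
          rw [this]
    _ = (d : ℂ) * (((‖A d g (-b) a‖) ^ 2 : ℝ) : ℂ) := by
        rw [absSq]

lemma inn_modT_modT (g : ZMod d → ℂ) (k l k' l' : ZMod d) :
    inn d (modT d k l g) (modT d k' l' g) = e d ((k - k')*l) * A d g (k'-k) (l'-l) := by
  unfold inn modT A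
  rw [Finset.mul_sum]
  refine (Fintype.sum_equiv (Equiv.addRight l) _ _ ?_).symm
  intro m
  simp only [Equiv.coe_addRight]
  rw [e_mul_val, e_mul_val, map_mul, conj_e]
  have h1 : (m + l) - l = m := by ring
  have h2 : (m + l) - l' = m - (l' - l) := by ring
  have h4 : e d (k*(m+l)) * e d (-(k'*(m+l))) = e d ((k-k')*l) * e d (-((k'-k)*m)) := by
    rw [← e_add, ← e_add]; congr 1; ring
  rw [h1, h2]
  linear_combination (-(g m * (starRingEnd ℂ) (g (m - (l' - l))))) * h4

lemma Gmat_entry (g : ZMod d → ℂ) (p q : ZMod d × ZMod d) :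
    Gmat d g p q = ((‖A d g (q.1 - p.1) (q.2 - p.2)‖ ^ 2 : ℝ) : ℂ) := by
  unfold Gmat
  rw [inn_modT_modT, norm_mul, abs_e, one_mul]

def U : Matrix (ZMod d × ZMod d) (ZMod d × ZMod d) ℂ :=
  fun p s => e d (s.1 * p.1 + s.2 * p.2)

def w (g : ZMod d → ℂ) (s : ZMod d × ZMod d) : ℂ :=
  (d : ℂ) * ((‖A d g (-s.2) s.1‖ ^ 2 : ℝ) : ℂ)

lemma GU (g : ZMod d → ℂ) : Gmat d g * U d = U d * Matrix.diagonal (w d g) := by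
  ext p s
  rw [Matrix.mul_apply, Matrix.mul_diagonal]
  have step1 : ∑ q : ZMod d × ZMod d, Gmat d g p q * U d q s
      = ∑ r : ZMod d × ZMod d,
          ((‖A d g r.1 r.2‖ ^ 2 : ℝ) : ℂ) * (e d (s.1*r.1 + s.2*r.2) * e d (s.1*p.1 + s.2*p.2)) := by
    refine (Fintype.sum_equiv (Equiv.addRight p) _ _ ?_).symm
    intro r
    rw [Gmat_entry]
    have hfst : (r + p).1 = r.1 + p.1 := rfl
    have hsnd : (r + p).2 = r.2 + p.2 := rfl
    rw [U]
    simp only [Equiv.coe_addRight, hfst, hsnd, add_sub_cancel_right]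
    have h4 : e d (s.1*(r.1+p.1) + s.2*(r.2+p.2)) = e d (s.1*r.1 + s.2*r.2) * e d (s.1*p.1 + s.2*p.2) := by
      rw [← e_add]; congr 1; ring
    rw [h4]
  rw [step1]
  have step2 : ∑ r : ZMod d × ZMod d,
      ((‖A d g r.1 r.2‖ ^ 2 : ℝ) : ℂ) * (e d (s.1*r.1 + s.2*r.2) * e d (s.1*p.1 + s.2*p.2))
      = (∑ k : ZMod d, ∑ l : ZMod d,
          ((‖A d g k l‖ ^ 2 : ℝ) : ℂ) * e d (s.1*k + s.2*l)) * e d (s.1*p.1 + s.2*p.2) := by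
    rw [Fintype.sum_prod_type, Finset.sum_mul]
    refine Finset.sum_congr rfl fun k _ => ?_
    rw [Finset.sum_mul]
    refine Finset.sum_congr rfl fun l _ => by ring
  rw [step2, moyal]
  rw [U, w]
  ring

def V : Matrix (ZMod d × ZMod d) (ZMod d × ZMod d) ℂ :=
  fun s q => e d (-(s.1 * q.1 + s.2 * q.2))

lemma UV (p q : ZMod d × ZMod d) :
    (U d * V d) p q = if p = q then ((d:ℂ)^2) else 0 := by
  rw [Matrix.mul_apply]
  have : ∀ s : ZMod d × ZMod d, U d p s * V d s q
      = e d (s.1 * (p.1 - q.1)) * e d (s.2 * (p.2 - q.2)) := by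
    intro s
    rw [U, V, ← e_add, ← e_add]
    congr 1; ring
  rw [Finset.sum_congr rfl fun s _ => this s, Fintype.sum_prod_type]
  have : ∀ a : ZMod d, ∑ b : ZMod d, e d (a * (p.1 - q.1)) * e d (b * (p.2 - q.2))
      = e d (a * (p.1 - q.1)) * (if p.2 - q.2 = 0 then (d:ℂ) else 0) := by
    intro a; rw [← Finset.mul_sum, sum_e]
  rw [Finset.sum_congr rfl fun a _ => this a, ← Finset.sum_mul, sum_e]
  have hpq : (p = q) ↔ (p.1 - q.1 = 0 ∧ p.2 - q.2 = 0) := by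
    constructor
    · rintro rfl; exact ⟨sub_self _, sub_self _⟩
    · rintro ⟨h1, h2⟩
      exact Prod.ext (by linear_combination h1) (by linear_combination h2)
  by_cases h1 : p.1 - q.1 = 0 <;> by_cases h2 : p.2 - q.2 = 0 <;>
    simp [h1, h2, hpq] <;> ring

lemma VU (p q : ZMod d × ZMod d) :
    (V d * U d) p q = if p = q then ((d:ℂ)^2) else 0 := by
  rw [Matrix.mul_apply]
  have : ∀ s : ZMod d × ZMod d, V d p s * U d s q
      = e d (s.1 * (q.1 - p.1)) * e d (s.2 * (q.2 - p.2)) := by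
    intro s
    rw [U, V, ← e_add, ← e_add]
    congr 1; ring
  rw [Finset.sum_congr rfl fun s _ => this s, Fintype.sum_prod_type]
  have : ∀ a : ZMod d, ∑ b : ZMod d, e d (a * (q.1 - p.1)) * e d (b * (q.2 - p.2))
      = e d (a * (q.1 - p.1)) * (if q.2 - p.2 = 0 then (d:ℂ) else 0) := by
    intro a; rw [← Finset.mul_sum, sum_e]
  rw [Finset.sum_congr rfl fun a _ => this a, ← Finset.sum_mul, sum_e]
  have hpq : (p = q) ↔ (q.1 - p.1 = 0 ∧ q.2 - p.2 = 0) := by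
    constructor
    · rintro rfl; exact ⟨sub_self _, sub_self _⟩
    · rintro ⟨h1, h2⟩
      exact Prod.ext (by linear_combination -h1) (by linear_combination -h2)
  by_cases h1 : q.1 - p.1 = 0 <;> by_cases h2 : q.2 - p.2 = 0 <;>
    simp [h1, h2, hpq] <;> ring

lemma dC_ne : ((d:ℂ)^2) ≠ 0 := by
  have : (d:ℂ) ≠ 0 := Nat.cast_ne_zero.mpr (NeZero.ne d)
  exact pow_ne_zero 2 this

lemma U_right_inv : U d * (((d:ℂ)^2)⁻¹ • V d) = 1 := by
  rw [Matrix.mul_smul]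
  ext p q
  rw [Matrix.smul_apply, UV, Matrix.one_apply]
  split_ifs <;> simp [dC_ne d]

lemma U_left_inv : (((d:ℂ)^2)⁻¹ • V d) * U d = 1 := by
  rw [Matrix.smul_mul]
  ext p q
  rw [Matrix.smul_apply, VU, Matrix.one_apply]
  split_ifs <;> simp [dC_ne d]

def U_invertible : Invertible (U d) :=
  invertibleOfRightInverse _ _ (U_right_inv d)

lemma rank_G (g : ZMod d → ℂ) :
    (Gmat d g).rank = Fintype.card {s : ZMod d × ZMod d // w d g s ≠ 0} := by
  classical
  have hinv : Invertible (U d) := U_invertible d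
  have hdet : IsUnit (U d).det := Matrix.isUnit_det_of_invertible _
  have h1 : (Gmat d g).rank = (Gmat d g * U d).rank :=
    (Matrix.rank_mul_eq_left_of_isUnit_det (U d) (Gmat d g) hdet).symm
  rw [h1, GU, Matrix.rank_mul_eq_right_of_isUnit_det (U d) _ hdet, Matrix.rank_diagonal]

lemma rank_iff (g : ZMod d → ℂ) :
    (Gmat d g).rank = d ^ 2 ↔ ∀ k l : ZMod d, A d g k l ≠ 0 := by
  classical
  rw [rank_G]
  have hcard : Fintype.card (ZMod d × ZMod d) = d ^ 2 := by
    rw [Fintype.card_prod, ZMod.card, sq]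
  constructor
  · intro h k l
    intro hA
    have hw : w d g (l, -k) = 0 := by
      rw [w]
      simp only [neg_neg]
      rw [hA]
      simp
    have hlt : Fintype.card {s : ZMod d × ZMod d // w d g s ≠ 0} < Fintype.card (ZMod d × ZMod d) :=
      Fintype.card_subtype_lt (x := (l, -k)) (by simp [hw])
    omega
  · intro h
    have hall : ∀ s : ZMod d × ZMod d, w d g s ≠ 0 := by
      intro s
      rw [w]
      have hA := h (-s.2) s.1
      have : ‖A d g (-s.2) s.1‖ ≠ 0 := by simpa using hA
      have hd : (d:ℂ) ≠ 0 := Nat.cast_ne_zero.mpr (NeZero.ne d)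
      intro hc
      rcases mul_eq_zero.mp hc with h' | h'
      · exact hd h'
      · rw [Complex.ofReal_eq_zero] at h'
        exact this (pow_eq_zero_iff (n := 2) (by norm_num) |>.mp h')
    rw [← hcard]
    exact Fintype.card_congr (Equiv.subtypeUnivEquiv hall)

/-- witness -/
lemma witness (k l : ZMod d) :
    ∃ g : ZMod d → ℂ, (∑ n : ZMod d, ‖g n‖ ^ 2 = 1) ∧ A d g k l ≠ 0 := by
  by_cases hl : l = 0
  · refine ⟨fun n => if n = 0 then 1 else 0, ?_, ?_⟩
    · rw [Finset.sum_eq_single 0]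
      · simp
      · intro n _ hn; simp [hn]
      · simp
    · subst hl
      have : A d (fun n => if n = 0 then (1:ℂ) else 0) k 0 = 1 := by
        unfold A
        rw [Finset.sum_eq_single 0]
        · simp [e_zero]
        · intro n _ hn; simp [hn]
        · simp
      rw [this]; exact one_ne_zero
  · set r : ℝ := (Real.sqrt 3)⁻¹ with hr
    have hr3 : r ^ 2 = 3⁻¹ := by
      rw [hr, inv_pow, Real.sq_sqrt (by norm_num : (0:ℝ) ≤ 3)]
    have hrpos : 0 < r := by
      rw [hr]; exact inv_pos.mpr (Real.sqrt_pos.mpr (by norm_num))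
    have hrc : (r : ℂ) ≠ 0 := Complex.ofReal_ne_zero.mpr (ne_of_gt hrpos)
    have h0l : (0 : ZMod d) ≠ l := fun h => hl h.symm
    set g : ZMod d → ℂ := fun n => if n = 0 then (r:ℂ) else if n = l then (1+I)*r else 0 with hg
    have hgz : ∀ n : ZMod d, n ≠ 0 → n ≠ l → g n = 0 := by
      intro n h1 h2; simp [hg, h1, h2]
    have hg0 : g 0 = (r:ℂ) := by simp [hg]
    have hgl : g l = (1+I)*r := by simp [hg, h0l.symm]
    refine ⟨g, ?_, ?_⟩
    · have hsub : ∑ n ∈ ({0, l} : Finset (ZMod d)), ‖g n‖ ^ 2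
          = ∑ n : ZMod d, ‖g n‖ ^ 2 := by
        apply Finset.sum_subset (Finset.subset_univ _)
        intro n _ hn
        simp only [Finset.mem_insert, Finset.mem_singleton] at hn
        push_neg at hn
        rw [hgz n hn.1 hn.2]
        simp
      rw [← hsub, Finset.sum_pair h0l, hg0, hgl]
      rw [norm_mul, Complex.norm_real, Real.norm_eq_abs, abs_of_pos hrpos]
      have habs : ‖1+I‖ ^ 2 = 2 := by
        rw [Complex.sq_norm]; simp [Complex.normSq_apply]; norm_num
      rw [mul_pow, habs]
      linarith [hr3]
    · have hsub : ∑ n ∈ ({0, l} : Finset (ZMod d)),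
            e d (-(k*n)) * (g n * (starRingEnd ℂ) (g (n - l)))
          = A d g k l := by
        apply Finset.sum_subset (Finset.subset_univ _)
        intro n _ hn
        simp only [Finset.mem_insert, Finset.mem_singleton] at hn
        push_neg at hn
        rw [hgz n hn.1 hn.2]
        ring
      rw [← hsub, Finset.sum_pair h0l]
      have hz : (0:ZMod d) - l = -l := by ring
      have hll : l - l = 0 := by ring
      have hk0 : -(k * (0:ZMod d)) = 0 := by ring
      rw [hz, hll, hk0, e_zero, hg0, hgl]
      have hnl0 : -l ≠ 0 := fun h => hl (neg_eq_zero.mp h)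
      set ε : ℂ := e d (-(k*l)) with hε
      by_cases h2 : -l = l
      · have hglneg : g (-l) = (1+I)*r := by rw [h2, hgl]
        have hε2 : ε^2 = 1 := by
          have hll2 : l + l = 0 := by linear_combination -h2
          rw [hε, sq, ← e_add]
          have : -(k*l) + -(k*l) = -(k*(l+l)) := by ring
          rw [this, hll2]
          have : -(k * (0:ZMod d)) = 0 := by ring
          rw [this, e_zero]
        rw [hglneg]
        have hform : 1 * ((r:ℂ) * (starRingEnd ℂ) ((1+I)*r)) + ε * ((1+I)*r * (starRingEnd ℂ) r)
            = (r:ℂ)^2 * ((1-I) + ε*(1+I)) := by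
          have hc1 : (starRingEnd ℂ) (1+I) = 1 - I := by rw [map_add, map_one, Complex.conj_I]; ring
          rw [map_mul, hc1, Complex.conj_ofReal]
          ring
        rw [hform]
        intro hA0
        rcases mul_eq_zero.mp hA0 with h' | h'
        · exact pow_ne_zero 2 hrc h'
        · have hI : Complex.I = 0 := by
            linear_combination ((ε*(1+I) - (1-I))/4) * h' + (-(1+I)^2/4) * hε2
          exact Complex.I_ne_zero hI
      · have hglneg : g (-l) = 0 := hgz _ hnl0 h2
        rw [hglneg]
        simp only [map_zero, mul_zero, zero_add]
        intro hA0
        have h1I : (1+I : ℂ) ≠ 0 := by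
          intro h; have := congrArg Complex.re h; simp at this
        have hcr : (starRingEnd ℂ) (r:ℂ) ≠ 0 := by rw [Complex.conj_ofReal]; exact hrc
        have := mul_ne_zero (e_ne_zero d (-(k*l)))
          (mul_ne_zero (mul_ne_zero h1I hrc) hcr)
        exact this hA0

lemma contA (k l : ZMod d) : Continuous (fun g : ZMod d → ℂ => A d g k l) := by
  unfold A
  refine continuous_finset_sum _ fun n _ => ?_
  exact continuous_const.mul ((continuous_apply n).mul
    (Complex.continuous_conj.comp (continuous_apply (n - l))))

lemma analyticA (k l : ZMod d) :
    AnalyticOnNhd ℝ (fun g : ZMod d → ℂ => A d g k l) Set.univ := by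
  unfold A
  refine Finset.analyticOnNhd_fun_sum _ fun n _ => ?_
  refine analyticOnNhd_const.mul ?_
  refine AnalyticOnNhd.mul ?_ ?_
  · exact (ContinuousLinearMap.proj (R := ℝ) (φ := fun _ : ZMod d => ℂ) n).analyticOnNhd _
  · exact ((Complex.conjCLE.toContinuousLinearMap).comp
      (ContinuousLinearMap.proj (R := ℝ) (φ := fun _ : ZMod d => ℂ) (n - l))).analyticOnNhd _

lemma homogA (t : ℝ) (g : ZMod d → ℂ) (k l : ZMod d) :
    A d (t • g) k l = ((t:ℂ)^2) * A d g k l := by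
  unfold A
  rw [Finset.mul_sum]
  refine Finset.sum_congr rfl fun n _ => ?_
  simp only [Pi.smul_apply, Complex.real_smul, map_mul, Complex.conj_ofReal]
  ring

def n2 (g : ZMod d → ℂ) : ℝ := Real.sqrt (∑ n : ZMod d, ‖g n‖ ^ 2)

lemma cont_sumsq : Continuous (fun g : ZMod d → ℂ => ∑ n : ZMod d, ‖g n‖ ^ 2) := by
  refine continuous_finset_sum _ fun n _ => ?_
  exact (continuous_norm.comp (continuous_apply n)).pow 2

lemma cont_n2 : Continuous (n2 d) :=
  Real.continuous_sqrt.comp (cont_sumsq d)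

lemma sumsq_pos (g : ZMod d → ℂ) (hg : g ≠ 0) : 0 < ∑ n : ZMod d, ‖g n‖ ^ 2 := by
  have hne : ∃ n, g n ≠ 0 := by
    by_contra h
    push_neg at h
    exact hg (funext h)
  obtain ⟨n, hn⟩ := hne
  refine Finset.sum_pos' (fun i _ => by positivity) ⟨n, Finset.mem_univ n, ?_⟩
  have := norm_pos_iff.mpr hn
  positivity

lemma n2_pos (g : ZMod d → ℂ) (hg : g ≠ 0) : 0 < n2 d g :=
  Real.sqrt_pos.mpr (sumsq_pos d g hg)

lemma sumsq_smul (t : ℝ) (g : ZMod d → ℂ) :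
    ∑ n : ZMod d, ‖(t • g) n‖ ^ 2 = t^2 * ∑ n : ZMod d, ‖g n‖ ^ 2 := by
  rw [Finset.mul_sum]
  refine Finset.sum_congr rfl fun n _ => ?_
  simp only [Pi.smul_apply, Complex.real_smul, norm_mul, Complex.norm_real, Real.norm_eq_abs]
  rw [mul_pow, _root_.sq_abs]

lemma unit_n2 {g : ZMod d → ℂ} (hg : ∑ n : ZMod d, ‖g n‖ ^ 2 = 1) : n2 d g = 1 := by
  rw [n2, hg, Real.sqrt_one]

lemma scaled_unit (g : ZMod d → ℂ) (hg : g ≠ 0) :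
    ∑ n : ZMod d, ‖((n2 d g)⁻¹ • g) n‖ ^ 2 = 1 := by
  rw [sumsq_smul]
  have h := sumsq_pos d g hg
  rw [inv_pow, n2, Real.sq_sqrt h.le]
  exact inv_mul_cancel₀ h.ne'

lemma sphere_ne_zero {g : ZMod d → ℂ} (hg : ∑ n : ZMod d, ‖g n‖ ^ 2 = 1) : g ≠ 0 := by
  intro h
  rw [h] at hg
  simp at hg

lemma rank_pi : 1 < Module.rank ℝ (ZMod d → ℂ) := by
  have hfin : Module.finrank ℝ (ZMod d → ℂ) = 2 * d := by
    rw [Module.finrank_pi_fintype]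
    simp [Complex.finrank_real_complex, ZMod.card, mul_comm]
  have h1 : 1 < Module.finrank ℝ (ZMod d → ℂ) := by
    rw [hfin]
    have := Nat.pos_of_ne_zero (NeZero.ne d)
    omega
  calc (1 : Cardinal) = ((1:ℕ) : Cardinal) := by norm_num
    _ < (Module.finrank ℝ (ZMod d → ℂ) : Cardinal) := by exact_mod_cast h1
    _ = Module.rank ℝ (ZMod d → ℂ) := Module.finrank_eq_rank ℝ _

/-- Density of each good set on the sphere -/
lemma dense_good (k l : ZMod d) :
    Dense {x : {g : ZMod d → ℂ // ∑ n : ZMod d, ‖g n‖ ^ 2 = 1} |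
      A d x.1 k l ≠ 0} := by
  by_contra hnd
  rw [dense_iff_inter_open] at hnd
  push_neg at hnd
  obtain ⟨U, hUopen, hUne, hUdisj⟩ := hnd
  obtain ⟨W, hWopen, hWU⟩ := isOpen_induced_iff.mp hUopen
  obtain ⟨x0, hx0U⟩ := hUne
  -- cone
  set C : Set (ZMod d → ℂ) := {y | y ≠ 0} ∩ (fun y => (n2 d y)⁻¹ • y) ⁻¹' W with hC
  have hCopen : IsOpen C := by
    refine ContinuousOn.isOpen_inter_preimage ?_ ?_ hWopen
    · refine ContinuousOn.fun_smul ?_ continuousOn_id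
      exact ContinuousOn.inv₀ (cont_n2 d).continuousOn
        (fun y hy => (n2_pos d y hy).ne')
    · exact isOpen_compl_singleton
  have hvanish : ∀ y ∈ C, A d y k l = 0 := by
    rintro y ⟨hy0, hyW⟩
    have hy0' : y ≠ 0 := hy0
    set u := (n2 d y)⁻¹ • y with hu
    have huS : ∑ n : ZMod d, ‖u n‖ ^ 2 = 1 := scaled_unit d y hy0'
    have huU : (⟨u, huS⟩ : {g : ZMod d → ℂ // ∑ n : ZMod d, ‖g n‖ ^ 2 = 1}) ∈ U := by
      rw [← hWU]; exact hyW
    have hAu : A d u k l = 0 := by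
      by_contra hAu
      exact Set.eq_empty_iff_forall_notMem.mp hUdisj _ ⟨huU, hAu⟩
    have hyu : y = (n2 d y) • u := by
      rw [hu, smul_smul, mul_inv_cancel₀ (n2_pos d y hy0').ne', one_smul]
    rw [hyu, homogA, hAu, mul_zero]
  -- identity theorem
  have hzero : ∀ y : ZMod d → ℂ, y ≠ 0 → A d y k l = 0 := by
    have hana : AnalyticOnNhd ℝ (fun g : ZMod d → ℂ => A d g k l) {(0 : ZMod d → ℂ)}ᶜ :=
      (analyticA d k l).mono (Set.subset_univ _)
    have hconn : IsPreconnected {(0 : ZMod d → ℂ)}ᶜ :=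
      (isConnected_compl_singleton_of_one_lt_rank (rank_pi d) 0).isPreconnected
    have hx0C : (x0 : ZMod d → ℂ) ∈ C := by
      constructor
      · exact sphere_ne_zero d x0.2
      · have : (n2 d (x0:ZMod d → ℂ))⁻¹ • (x0 : ZMod d → ℂ) = (x0 : ZMod d → ℂ) := by
          rw [unit_n2 d x0.2, inv_one, one_smul]
        rw [Set.mem_preimage, this]
        rw [← hWU] at hx0U
        exact hx0U
    have hx0ne : (x0 : ZMod d → ℂ) ∈ {(0 : ZMod d → ℂ)}ᶜ :=
      Set.mem_compl_singleton_iff.mpr (sphere_ne_zero d x0.2)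
    have hev : (fun g : ZMod d → ℂ => A d g k l) =ᶠ[nhds (x0 : ZMod d → ℂ)] 0 := by
      filter_upwards [hCopen.mem_nhds hx0C] with y hy
      exact hvanish y hy
    have heq := hana.eqOn_zero_of_preconnected_of_eventuallyEq_zero hconn hx0ne hev
    intro y hy
    exact heq (Set.mem_compl_singleton_iff.mpr hy)
  obtain ⟨g0, hg0S, hg0A⟩ := witness d k l
  exact hg0A (hzero g0 (sphere_ne_zero d hg0S))

end S3

/-- for `d ≥ 2` the set of unit vectors `g` with
`⟨g, M^k T^ℓ g⟩ ≠ 0` for all `(k,ℓ)` is nonempty, open and dense in the unit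
sphere of `ℂ^d` (with its subspace topology), and it coincides with the set of
unit vectors with `rank G(g) = d²`. -/
theorem stmt3 (d : ℕ) [NeZero d] (hd : 2 ≤ d) :
    ∀ S : Set {g : ZMod d → ℂ // ∑ n : ZMod d, ‖g n‖ ^ 2 = 1},
      (S = {g | ∀ k l : ZMod d, inn d g.1 (modT d k l g.1) ≠ 0}) →
      (S.Nonempty ∧ IsOpen S ∧ Dense S ∧
        S = {g | (Gmat d g.1).rank = d ^ 2}) := by
  intro S hS
  subst hS
  have hSeq : {g : {g : ZMod d → ℂ // ∑ n : ZMod d, ‖g n‖ ^ 2 = 1} |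
        ∀ k l : ZMod d, inn d g.1 (modT d k l g.1) ≠ 0}
      = ⋂ p : ZMod d × ZMod d,
          {g : {g : ZMod d → ℂ // ∑ n : ZMod d, ‖g n‖ ^ 2 = 1} |
            S3.A d g.1 p.1 p.2 ≠ 0} := by
    ext x
    simp only [Set.mem_setOf_eq, Set.mem_iInter, S3.inn_modT]
    exact ⟨fun h p => h p.1 p.2, fun h k l => h (k, l)⟩
  have hopen_each : ∀ p : ZMod d × ZMod d,
      IsOpen {g : {g : ZMod d → ℂ // ∑ n : ZMod d, ‖g n‖ ^ 2 = 1} |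
        S3.A d g.1 p.1 p.2 ≠ 0} := by
    intro p
    have hc : Continuous (fun x : {g : ZMod d → ℂ // ∑ n : ZMod d, ‖g n‖ ^ 2 = 1}
        => S3.A d x.1 p.1 p.2) := (S3.contA d p.1 p.2).comp continuous_subtype_val
    exact isOpen_compl_singleton.preimage hc
  have hopen : IsOpen {g : {g : ZMod d → ℂ // ∑ n : ZMod d, ‖g n‖ ^ 2 = 1} |
      ∀ k l : ZMod d, inn d g.1 (modT d k l g.1) ≠ 0} := by
    rw [hSeq]
    exact isOpen_iInter_of_finite hopen_each
  haveI : CompleteSpace {g : ZMod d → ℂ // ∑ n : ZMod d, ‖g n‖ ^ 2 = 1} := by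
    refine (show IsClosed {g : ZMod d → ℂ | ∑ n : ZMod d, ‖g n‖ ^ 2 = 1} from ?_).completeSpace_coe
    exact isClosed_eq (S3.cont_sumsq d) continuous_const
  have hdense : Dense {g : {g : ZMod d → ℂ // ∑ n : ZMod d, ‖g n‖ ^ 2 = 1} |
      ∀ k l : ZMod d, inn d g.1 (modT d k l g.1) ≠ 0} := by
    rw [hSeq]
    exact dense_iInter_of_isOpen hopen_each (fun p => S3.dense_good d p.1 p.2)
  haveI : Nonempty {g : ZMod d → ℂ // ∑ n : ZMod d, ‖g n‖ ^ 2 = 1} := by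
    obtain ⟨g0, hg0, _⟩ := S3.witness d 0 0
    exact ⟨⟨g0, hg0⟩⟩
  refine ⟨hdense.nonempty, hopen, hdense, ?_⟩
  ext x
  simp only [Set.mem_setOf_eq, S3.inn_modT]
  rw [S3.rank_iff]
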